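/- Consider the reservation mechanism in which at each round at most one station can reserve the second currently-available (unreserved) future round, or cancel its existing reservation, and each station holds at most one reservation at a time. Then in any infinite execution there are infinitely many regular (unreserved) rounds. -/

import Mathlib

/-- Reservation mechanism: `res t p` is the round currently reserved by station `p` at
the start of round `t` (reservations are for present-or-future rounds); at each round at
most one station acts, either keeping its reservation, cancelling it, or reserving the
second currently-available (unreserved) future round, i.e. an unreserved round `r2 > t`
such that there is exactly one unreserved round strictly between `t` and `r2`;
reservations of the current round lapse.  Then there are infinitely many regular
rounds, i.e. rounds reserved by no station when they arrive. -/
theorem stmt11 (n : ℕ) (res : ℕ → Fin n → Option ℕ)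
    (hfuture : ∀ t p r, res t p = some r → t ≤ r)
    (hstep : ∀ t, ∃ p : Fin n,
      (∀ q, q ≠ p → res (t + 1) q = res t q ∨
        (res t q = some t ∧ res (t + 1) q = none)) ∧
      (res (t + 1) p = res t p ∨ res (t + 1) p = none ∨
        ∃ r2, res (t + 1) p = some r2 ∧ t < r2 ∧ (∀ q, res t q ≠ some r2) ∧
          ∃! r1, t < r1 ∧ r1 < r2 ∧ ∀ q, res t q ≠ some r1)) :
    {t : ℕ | ∀ p, res t p ≠ some t}.Infinite := by
  -- existence of an available future round
  have hex : ∀ t, ∃ r, t < r ∧ ∀ q, res t q ≠ some r := by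
    intro t
    by_contra h
    push_neg at h
    obtain ⟨q0, _⟩ := h (t + 1) (by omega)
    choose g hg using h
    set G : ℕ → Fin n := fun r => if hr : t < r then g r hr else q0 with hG
    have hinj : Set.InjOn G (Finset.Ioc t (t + n + 1)) := by
      intro a ha b hb hab
      simp only [Finset.coe_Ioc, Set.mem_Ioc] at ha hb
      have h1 : res t (G a) = some a := by simp [hG, ha.1, hg]
      have h2 : res t (G b) = some b := by simp [hG, hb.1, hg]
      rw [hab, h2] at h1
      exact (Option.some_injective _ h1).symm
    have := Finset.card_le_card_of_injOn G (fun a _ => Finset.mem_univ _) hinj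
    simp [Nat.card_Ioc] at this
    omega
  -- a minimal available round stays available
  have hstay : ∀ t r, t < r → (∀ q, res t q ≠ some r) →
      (∀ r', t < r' → r' < r → ∃ q, res t q = some r') →
      ∀ q, res (t + 1) q ≠ some r := by
    intro t r htr havail hmin q hq
    obtain ⟨p, hother, hp⟩ := hstep t
    by_cases hqp : q = p
    · subst hqp
      rcases hp with h1 | h1 | ⟨r2, h1, h2, h3, r1, ⟨hr1a, hr1b, hr1c⟩, _⟩
      · rw [h1] at hq; exact havail q hq
      · rw [h1] at hq; exact Option.some_ne_none _ hq.symm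
      · rw [h1] at hq
        have : r2 = r := Option.some_injective _ hq
        subst this
        obtain ⟨q', hq'⟩ := hmin r1 hr1a hr1b
        exact hr1c q' hq'
    · rcases hother q hqp with h1 | ⟨h1, h2⟩
      · rw [h1] at hq; exact havail q hq
      · rw [h2] at hq; exact Option.some_ne_none _ hq.symm
  -- main argument
  by_contra hfin
  rw [Set.not_infinite] at hfin
  obtain ⟨N, hN⟩ := hfin.bddAbove
  have hreg : ∀ t, N < t → ∃ p, res t p = some t := by
    intro t ht
    by_contra h
    push_neg at h
    exact absurd (hN h) (by omega)
  set f : ℕ → ℕ := fun t => Nat.find (hex t) with hf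
  have hflt : ∀ t, t < f t := fun t => (Nat.find_spec (hex t)).1
  have hfav : ∀ t q, res t q ≠ some (f t) := fun t => (Nat.find_spec (hex t)).2
  have hfmin : ∀ t r', t < r' → r' < f t → ∃ q, res t q = some r' := by
    intro t r' h1 h2
    have := Nat.find_min (hex t) h2
    push_neg at this
    exact this h1
  have hclaim1 : ∀ t, N ≤ t → t + 1 < f t := by
    intro t ht
    rcases Nat.lt_or_ge (t + 1) (f t) with h | h
    · exact h
    · exfalso
      have hft : f t = t + 1 := by have := hflt t; omega
      have hav : ∀ q, res (t + 1) q ≠ some (t + 1) := by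
        have := hstay t (f t) (hflt t) (hfav t) (hfmin t)
        rwa [hft] at this
      obtain ⟨p, hp⟩ := hreg (t + 1) (by omega)
      exact hav p hp
  have hclaim2 : ∀ t, N ≤ t → f (t + 1) ≤ f t := by
    intro t ht
    have hav : ∀ q, res (t + 1) q ≠ some (f t) :=
      hstay t (f t) (hflt t) (hfav t) (hfmin t)
    exact Nat.find_le ⟨hclaim1 t ht, hav⟩
  have hmono : ∀ k, f (N + 1 + k) ≤ f (N + 1) := by
    intro k
    induction k with
    | zero => rfl
    | succ k ih =>
      have := hclaim2 (N + 1 + k) (by omega)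
      calc f (N + 1 + (k + 1)) = f (N + 1 + k + 1) := by ring_nf
        _ ≤ f (N + 1 + k) := this
        _ ≤ f (N + 1) := ih
  have h1 := hmono (f (N + 1))
  have h2 := hclaim1 (N + 1 + f (N + 1)) (by omega)
  omega
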